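/- Let u : ℝ^d → ℝ be continuous, ℤ^d-periodic, and K-semi-concave for some K > 0 (i.e. x ↦ u(x) − K‖x‖² is concave). Then there exist a constant C > 0 and a family F of C² functions f : ℝ^d → ℝ whose second derivatives satisfy ‖D²f(x)‖ ≤ C for all x ∈ ℝ^d and all f ∈ F, such that: (i) u(x) = min_{f∈F} f(x) for every x (the minimum being attained); and (ii) for every x ∈ ℝ^d and every proximal super-differential p of u at x, there exists f ∈ F with f(x) = u(x) and ∇f(x) = p. -/

import Mathlib

open Filter Set InnerProductSpace

variable {E : Type*} [NormedAddCommGroup E] [InnerProductSpace ℝ E] [CompleteSpace E]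

/-- A continuous concave function on a real Hilbert space has a supergradient everywhere. -/
lemma exists_supergradient (v : E → ℝ) (hv : Continuous v) (hc : ConcaveOn ℝ Set.univ v)
    (x₀ : E) : ∃ q : E, ∀ y, v y ≤ v x₀ + inner ℝ q (y - x₀) := by
  set S : Set (E × ℝ) := {z | z.2 < v z.1} with hS
  have hopen : IsOpen S := isOpen_lt continuous_snd (hv.comp continuous_fst)
  have hconv : Convex ℝ S := by
    rintro ⟨y₁, t₁⟩ h₁ ⟨y₂, t₂⟩ h₂ a b ha hb hab
    simp only [hS, mem_setOf_eq] at h₁ h₂ ⊢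
    have hcc := hc.2 (mem_univ y₁) (mem_univ y₂) ha hb hab
    simp only [smul_eq_mul] at hcc
    have key : a * t₁ + b * t₂ < a * v y₁ + b * v y₂ := by
      rcases ha.lt_or_eq with ha' | ha'
      · nlinarith
      · have hb1 : b = 1 := by linarith
        rw [← ha', hb1]; simpa using h₂
    simpa using key.trans_le hcc
  have hx₀ : ((x₀, v x₀) : E × ℝ) ∉ S := by simp [hS]
  obtain ⟨φ, hφ⟩ := geometric_hahn_banach_open_point hconv hopen hx₀
  set ψ : E →L[ℝ] ℝ := φ.comp (ContinuousLinearMap.inl ℝ E ℝ) with hψ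
  set c : ℝ := φ (0, 1) with hcdef
  have hdecomp : ∀ (y : E) (t : ℝ), φ (y, t) = ψ y + t * c := by
    intro y t
    have : ((y, t) : E × ℝ) = (y, 0) + t • ((0 : E), (1 : ℝ)) := by
      simp [Prod.ext_iff]
    rw [this, map_add, map_smul]
    simp [hψ, hcdef, ContinuousLinearMap.inl_apply, smul_eq_mul]
  have hc0 : 0 < c := by
    have h1 : φ (x₀, v x₀ - 1) < φ (x₀, v x₀) := hφ _ (by simp [hS])
    rw [hdecomp, hdecomp] at h1
    nlinarith
  have key : ∀ y, ψ y + v y * c ≤ ψ x₀ + v x₀ * c := by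
    intro y
    have h2 : ∀ ε > (0:ℝ), ψ y + v y * c ≤ ψ x₀ + v x₀ * c + ε := by
      intro ε hε
      have h1 : φ (y, v y - ε / c) < φ (x₀, v x₀) := hφ _ (by
        simp only [hS, mem_setOf_eq]
        have : 0 < ε / c := div_pos hε hc0
        linarith)
      rw [hdecomp, hdecomp] at h1
      have : (v y - ε / c) * c = v y * c - ε := by field_simp
      linarith [this ▸ h1]
    linarith [le_of_forall_pos_le_add h2]
  refine ⟨(-c⁻¹) • (InnerProductSpace.toDual ℝ E).symm ψ, fun y => ?_⟩
  have hinner : (inner ℝ ((-c⁻¹) • (InnerProductSpace.toDual ℝ E).symm ψ) (y - x₀) : ℝ)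
      = -c⁻¹ * (ψ y - ψ x₀) := by
    rw [real_inner_smul_left, InnerProductSpace.toDual_symm_apply]
    simp [map_sub]
  rw [hinner]
  have hc0' : c ≠ 0 := ne_of_gt hc0
  have := key y
  have h3 : v y * c ≤ v x₀ * c + (ψ x₀ - ψ y) := by linarith
  have h4 : v y - v x₀ ≤ (ψ x₀ - ψ y) / c := (le_div_iff₀ hc0).2 (by nlinarith)
  calc v y ≤ v x₀ + (ψ x₀ - ψ y) / c := by linarith
    _ = v x₀ + -c⁻¹ * (ψ y - ψ x₀) := by ring

variable {E : Type*} [NormedAddCommGroup E] [InnerProductSpace ℝ E]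

/-- For a concave function, a first-order local upper bound gives a global supergradient. -/
lemma supergradient_of_local (v : E → ℝ) (hc : ConcaveOn ℝ Set.univ v) (x q : E)
    (h : ∀ c > (0:ℝ), ∀ᶠ y in nhds x, v y ≤ v x + inner ℝ q (y - x) + c * ‖y - x‖) :
    ∀ y, v y ≤ v x + inner ℝ q (y - x) := by
  intro y
  have main : ∀ c > (0:ℝ), v y ≤ v x + inner ℝ q (y - x) + c * ‖y - x‖ := by
    intro c hc0
    -- move along the segment from x to y
    have htend : Tendsto (fun t : ℝ => x + t • (y - x)) (nhdsWithin 0 (Set.Ioo (0:ℝ) 1)) (nhds x) := by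
      have : Continuous (fun t : ℝ => x + t • (y - x)) := by continuity
      have h0 : (fun t : ℝ => x + t • (y - x)) 0 = x := by simp
      exact (this.tendsto' 0 x h0).mono_left nhdsWithin_le_nhds
    have hev : ∀ᶠ t in nhdsWithin (0:ℝ) (Set.Ioo (0:ℝ) 1),
        v (x + t • (y - x)) ≤ v x + inner ℝ q ((x + t • (y - x)) - x) + c * ‖(x + t • (y - x)) - x‖ :=
      htend.eventually (h c hc0)
    have hnb : (nhdsWithin (0:ℝ) (Set.Ioo (0:ℝ) 1)).NeBot :=
      left_nhdsWithin_Ioo_neBot (by norm_num)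
    obtain ⟨t, ht, htI⟩ := (hev.and self_mem_nhdsWithin).exists
    obtain ⟨ht0, ht1⟩ := htI
    -- concavity along the segment
    have hcc := hc.2 (mem_univ x) (mem_univ y) (by linarith : (0:ℝ) ≤ 1 - t) ht0.le (by ring)
    have hseg : (1 - t) • x + t • y = x + t • (y - x) := by
      simp [smul_sub, sub_smul]; abel
    rw [hseg] at hcc
    simp only [smul_eq_mul] at hcc
    have hsub : (x + t • (y - x)) - x = t • (y - x) := by abel
    rw [hsub] at ht
    rw [real_inner_smul_right, norm_smul, Real.norm_eq_abs, abs_of_pos ht0] at ht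
    have := hcc.trans ht
    nlinarith [this, ht0]
  rcases eq_or_ne y x with rfl | hne
  · simp
  · have hpos : 0 < ‖y - x‖ := by
      simpa [sub_eq_zero] using norm_pos_iff.2 (sub_ne_zero.2 hne)
    have : ∀ ε > (0:ℝ), v y ≤ (v x + inner ℝ q (y - x)) + ε := by
      intro ε hε
      have := main (ε / ‖y - x‖) (div_pos hε hpos)
      calc v y ≤ v x + inner ℝ q (y - x) + (ε / ‖y - x‖) * ‖y - x‖ := this
        _ = (v x + inner ℝ q (y - x)) + ε := by field_simp
    linarith [le_of_forall_pos_le_add this]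
set_option linter.unusedSectionVars false
open Filter Set InnerProductSpace

variable {E : Type*} [NormedAddCommGroup E] [InnerProductSpace ℝ E] [CompleteSpace E]

section quad
variable (K a : ℝ) (x₀ q : E)

/-- The quadratic comparison function. -/
def quadF : E → ℝ := fun y => a + inner ℝ q (y - x₀) + K * (‖y‖ ^ 2 - ‖x₀‖ ^ 2)

lemma quadF_self : quadF K a x₀ q x₀ = a := by simp [quadF]

lemma quadF_contDiff : ContDiff ℝ 2 (quadF K a x₀ q) := by
  refine (contDiff_const.add ((contDiff_const (c := q)).inner ℝ (contDiff_id.sub contDiff_const))).add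
    (contDiff_const.mul (((contDiff_norm_sq ℝ)).sub contDiff_const))

lemma quadF_hasFDerivAt (y : E) :
    HasFDerivAt (quadF K a x₀ q) (innerSL ℝ q + ((2 * K) • (innerSL ℝ (E := E))) y) y := by
  have h1 : HasFDerivAt (fun y : E => (inner ℝ q (y - x₀) : ℝ))
      ((innerSL ℝ q).comp (ContinuousLinearMap.id ℝ E)) y :=
    (innerSL ℝ q).hasFDerivAt.comp y ((hasFDerivAt_id y).sub_const x₀)
  have h2 : HasFDerivAt (fun y : E => K * (‖y‖ ^ 2 - ‖x₀‖ ^ 2))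
      (K • (2 • innerSL ℝ y)) y :=
    (((hasStrictFDerivAt_norm_sq y).hasFDerivAt).sub_const _).const_mul K
  have := (h1.const_add a).add h2
  refine this.congr_fderiv ?_
  ext z
  simp [inner_smul_left, two_smul, real_inner_smul_left]
  ring

lemma quadF_hasGradientAt (y : E) :
    HasGradientAt (quadF K a x₀ q) (q + (2 * K) • y) y := by
  rw [hasGradientAt_iff_hasFDerivAt]
  refine (quadF_hasFDerivAt K a x₀ q y).congr_fderiv ?_
  ext z
  simp [toDual_apply_apply, inner_add_left, real_inner_smul_left]

lemma quadF_gradient (y : E) : gradient (quadF K a x₀ q) y = q + (2 * K) • y :=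
  (quadF_hasGradientAt K a x₀ q y).gradient

lemma quadF_snd_deriv_bound (hK : 0 < K) (x : E) :
    ‖iteratedFDeriv ℝ 2 (quadF K a x₀ q) x‖ ≤ 2 * K := by
  set L : E →L[ℝ] E →L[ℝ] ℝ := (2 * K) • (innerSL ℝ (E := E)) with hL
  have hfd : fderiv ℝ (quadF K a x₀ q) = fun y => innerSL ℝ q + L y :=
    funext fun y => (quadF_hasFDerivAt K a x₀ q y).fderiv
  have h2 : fderiv ℝ (fderiv ℝ (quadF K a x₀ q)) x = L := by
    rw [hfd]
    exact (L.hasFDerivAt.const_add _).fderiv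
  rw [← norm_iteratedFDeriv_fderiv, ← norm_iteratedFDeriv_fderiv,
    norm_iteratedFDeriv_zero, h2]
  refine le_trans (le_of_eq rfl) ?_
  refine ContinuousLinearMap.opNorm_le_bound _ (by linarith) (fun z => ?_)
  refine ContinuousLinearMap.opNorm_le_bound _ (by positivity) (fun y => ?_)
  have hz : L z y = 2 * K * (inner ℝ z y : ℝ) := rfl
  rw [hz, Real.norm_eq_abs, abs_mul, abs_of_pos (by linarith : (0:ℝ) < 2*K)]
  have := abs_real_inner_le_norm z y
  nlinarith

end quad

open Filter Set

noncomputable section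

/-- A function `ℝᵈ → ℝ` is ℤᵈ-periodic if it is invariant under integer translations. -/
def ZPeriodic {d : ℕ} (f : EuclideanSpace ℝ (Fin d) → ℝ) : Prop :=
  ∀ (x : EuclideanSpace ℝ (Fin d)) (k : Fin d → ℤ),
    f (x + (EuclideanSpace.equiv (Fin d) ℝ).symm (fun i => (k i : ℝ))) = f x

/-- `p` is a proximal super-differential of `u` at `x`: there is a `C²` function `g` with
`g ≥ u` near `x`, `g(x) = u(x)` and `∇g(x) = p`. -/
def ProxSuperDiff {d : ℕ} (u : EuclideanSpace ℝ (Fin d) → ℝ)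
    (x p : EuclideanSpace ℝ (Fin d)) : Prop :=
  ∃ g : EuclideanSpace ℝ (Fin d) → ℝ, ContDiff ℝ 2 g ∧ g x = u x ∧
    (∀ᶠ y in nhds x, u y ≤ g y) ∧ gradient g x = p

/-- A continuous ℤᵈ-periodic `K`-semi-concave function is the minimum of a family of `C²`
functions with uniformly bounded second derivatives, in such a way that every proximal
super-differential is realized as the derivative of a function of the family. -/
theorem semiconcave_is_min_of_C2_family {d : ℕ} (u : EuclideanSpace ℝ (Fin d) → ℝ)
    (hu : Continuous u) (hper : ZPeriodic u) (K : ℝ) (hK : 0 < K)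
    (hconc : ConcaveOn ℝ Set.univ (fun x => u x - K * ‖x‖ ^ 2)) :
    ∃ C > (0:ℝ), ∃ F : Set (EuclideanSpace ℝ (Fin d) → ℝ),
      (∀ f ∈ F, ContDiff ℝ 2 f ∧ ∀ x, ‖iteratedFDeriv ℝ 2 f x‖ ≤ C) ∧
      (∀ x, (∀ f ∈ F, u x ≤ f x) ∧ ∃ f ∈ F, f x = u x) ∧
      (∀ x p, ProxSuperDiff u x p → ∃ f ∈ F, f x = u x ∧ gradient f x = p) := by
  classical
  set v : EuclideanSpace ℝ (Fin d) → ℝ := fun x => u x - K * ‖x‖ ^ 2 with hvdef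
  have hv : Continuous v := by
    rw [hvdef]; exact hu.sub (continuous_const.mul (continuous_norm.pow 2))
  set F : Set (EuclideanSpace ℝ (Fin d) → ℝ) :=
    {f | ∃ x₀ q : EuclideanSpace ℝ (Fin d), (∀ y, v y ≤ v x₀ + inner ℝ q (y - x₀)) ∧ f = quadF K (u x₀) x₀ q} with hF
  have hconc' : ConcaveOn ℝ Set.univ v := by rw [hvdef]; exact hconc
  refine ⟨2 * K, by linarith, F, ?_, ?_, ?_⟩
  · rintro f ⟨x₀, q, hsg, rfl⟩
    exact ⟨quadF_contDiff K (u x₀) x₀ q, fun x => quadF_snd_deriv_bound K (u x₀) x₀ q hK x⟩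
  · intro x
    constructor
    · rintro f ⟨x₀, q, hsg, rfl⟩
      have := hsg x
      simp only [hvdef] at this
      simp only [quadF]
      linarith
    · obtain ⟨q, hq⟩ := exists_supergradient v hv hconc' x
      exact ⟨quadF K (u x) x q, ⟨x, q, hq, rfl⟩, quadF_self K (u x) x q⟩
  · rintro x p ⟨g, hg, hgx, hloc, hgrad⟩
    set q : EuclideanSpace ℝ (Fin d) := p - (2 * K) • x with hqdef
    have hdiff : DifferentiableAt ℝ g x :=
      (hg.differentiable (by norm_num)).differentiableAt
    have hgradAt : HasGradientAt g p x := hgrad ▸ hdiff.hasGradientAt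
    have hfd : HasFDerivAt g ((InnerProductSpace.toDual ℝ (EuclideanSpace ℝ (Fin d))) p) x :=
      hasGradientAt_iff_hasFDerivAt.1 hgradAt
    have hlocal : ∀ c > (0:ℝ), ∀ᶠ y in nhds x, v y ≤ v x + inner ℝ q (y - x) + c * ‖y - x‖ := by
      intro c hc0
      have hlo := hfd.isLittleO.def hc0
      filter_upwards [hloc, hlo] with y h1 h2
      have h2' : g y - g x - inner ℝ p (y - x) ≤ c * ‖y - x‖ := by
        rw [Real.norm_eq_abs] at h2
        have := (abs_le.1 (h2.trans_eq rfl)).2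
        rw [InnerProductSpace.toDual_apply_apply] at this
        simpa using this
      have hq1 : (inner ℝ q (y - x) : ℝ) = inner ℝ p (y - x) - 2 * K * inner ℝ x (y - x) := by
        rw [hqdef, inner_sub_left, real_inner_smul_left]
      have hq2 : ‖y‖ ^ 2 - ‖x‖ ^ 2 = 2 * inner ℝ x (y - x) + ‖y - x‖ ^ 2 := by
        have hns : ‖y - x‖ ^ 2 = ‖y‖ ^ 2 - 2 * inner ℝ y x + ‖x‖ ^ 2 := norm_sub_sq_real y x
        have hix : (inner ℝ x (y - x) : ℝ) = inner ℝ x y - ‖x‖ ^ 2 := by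
          rw [inner_sub_right, real_inner_self_eq_norm_sq]
        have hcomm : (inner ℝ y x : ℝ) = inner ℝ x y := real_inner_comm x y
        linarith
      have hKsq : 0 ≤ K * ‖y - x‖ ^ 2 := by positivity
      have hq2K : K * ‖y‖ ^ 2 - K * ‖x‖ ^ 2
          = 2 * K * inner ℝ x (y - x) + K * ‖y - x‖ ^ 2 := by linear_combination K * hq2
      simp only [hvdef]
      linarith [h1, h2', hgx, hq1, hq2K, hKsq]
    have hsg := supergradient_of_local v hconc' x q hlocal
    refine ⟨quadF K (u x) x q, ⟨x, q, hsg, rfl⟩, quadF_self K (u x) x q, ?_⟩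
    rw [quadF_gradient, hqdef, sub_add_cancel]
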